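/- Let m ≥ 2 and n ≥ m+1. In ℝ^m, let v_k = 2m·e_k for 1 ≤ k ≤ m (standard basis vectors scaled by 2m), v_{m+1} = (1,...,1), and v_k = 0 for m+1 < k ≤ n. Then v_{m+1} is coordinatewise strictly dominated by the uniform convex combination of v_1, ..., v_m, but not by any convex combination of m−1 or fewer of the vectors {v_k : k ≠ m+1}. -/
import Mathlib


open Finset

theorem stmt_18 (m n : ℕ) (hm : 2 ≤ m) (hn : m + 1 ≤ n)
    (v : Fin n → Fin m → ℝ)
    (hv : ∀ (k : Fin n) (j : Fin m),
      v k j = if (k : ℕ) < m then (if (j : ℕ) = (k : ℕ) then 2 * (m : ℝ) else 0)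
        else if (k : ℕ) = m then 1 else 0) :
    (∀ j, v ⟨m, by omega⟩ j <
        ∑ k ∈ Finset.univ.filter (fun k : Fin n => (k : ℕ) < m),
          (1 / (m : ℝ)) * v k j) ∧
    ¬ ∃ (S : Finset (Fin n)) (mu : Fin n → ℝ),
        (⟨m, by omega⟩ : Fin n) ∉ S ∧ S.card ≤ m - 1 ∧
        (∀ k ∈ S, 0 ≤ mu k) ∧ ∑ k ∈ S, mu k = 1 ∧
        ∀ j, v ⟨m, by omega⟩ j < ∑ k ∈ S, mu k * v k j := by
  have hmpos : (0:ℝ) < (m:ℝ) := by positivity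
  constructor
  · intro j
    have hvm : v ⟨m, by omega⟩ j = 1 := by
      rw [hv]; simp
    have hsum : ∑ k ∈ Finset.univ.filter (fun k : Fin n => (k : ℕ) < m),
        (1 / (m : ℝ)) * v k j = 2 := by
      rw [Finset.sum_eq_single (⟨(j:ℕ), by omega⟩ : Fin n)]
      · rw [hv]
        simp only [Fin.val_mk]
        rw [if_pos j.isLt]
        norm_num
        field_simp
      · intro k hk hne
        rw [hv]
        simp only [Finset.mem_filter] at hk
        rw [if_pos hk.2, if_neg, mul_zero]
        intro hje
        apply hne
        exact Fin.ext hje.symm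
      · intro h
        exfalso
        apply h
        simp only [Finset.mem_filter, Finset.mem_univ, true_and, Fin.val_mk]
        exact j.isLt
    rw [hvm, hsum]; norm_num
  · rintro ⟨S, mu, hmS, hcard, hmu0, hmu1, hdom⟩
    -- map elements of S with index < m into Fin m
    set T : Finset (Fin m) := (S.filter (fun k : Fin n => (k:ℕ) < m)).attach.image
      (fun k => (⟨(k.1 : ℕ), (by have h := k.2; simp only [Finset.mem_filter] at h; exact h.2)⟩ : Fin m)) with hT
    have hTcard : T.card < m := by
      calc T.card ≤ (S.filter (fun k : Fin n => (k:ℕ) < m)).attach.card :=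
            Finset.card_image_le
        _ ≤ S.card := by rw [Finset.card_attach]; exact Finset.card_filter_le _ _
        _ ≤ m - 1 := hcard
        _ < m := by omega
    have : T ≠ Finset.univ := by
      intro h
      rw [h, Finset.card_univ, Fintype.card_fin] at hTcard
      omega
    obtain ⟨j, hj⟩ : ∃ j : Fin m, j ∉ T := by
      by_contra h
      push_neg at h
      exact this (Finset.eq_univ_iff_forall.mpr h)
    have hzero : ∑ k ∈ S, mu k * v k j = 0 := by
      apply Finset.sum_eq_zero
      intro k hk
      rw [hv]
      by_cases hkm : (k:ℕ) < m
      · rw [if_pos hkm, if_neg, mul_zero]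
        intro hje
        apply hj
        rw [hT]
        refine Finset.mem_image.mpr ⟨⟨k, Finset.mem_filter.mpr ⟨hk, hkm⟩⟩,
          Finset.mem_attach _ _, ?_⟩
        exact Fin.ext hje.symm
      · rw [if_neg hkm, if_neg, mul_zero]
        intro hke
        apply hmS
        have : k = ⟨m, by omega⟩ := Fin.ext hke
        rwa [this] at hk
    have h1 := hdom j
    rw [hv, hzero] at h1
    simp only [Fin.val_mk, lt_self_iff_false, if_false, if_pos rfl, if_true] at h1
    linarith
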